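/- arXiv:0910.1610 — 4 statements merged into one kernel-verified Lean document; each statement's English description precedes it below -/
import Mathlib

section
/- Let Δ be a simplicial complex on [n] with all d_i ≥ 2, and let k = init(I_Δ) be the smallest cardinality of a non-face of Δ. Then the initial degree of the toric ideal I_{M(Δ,d)} (the smallest degree of a minimal generator, equivalently the smallest degree of a nonzero binomial in I_M) equals 2^{k−1}. -/
open Finset

open scoped Classical

/-- An (abstract) simplicial complex on the vertex set `[n] = Fin n`:
a downward-closed collection of finite subsets containing the empty set. -/
structure SC (n : ℕ) where
  faces : Finset (Finset (Fin n))
  down : ∀ F ∈ faces, ∀ G : Finset (Fin n), G ⊆ F → G ∈ faces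
  empty_mem : (∅ : Finset (Fin n)) ∈ faces

namespace SC

variable {n : ℕ}

/-- `F` is a facet (inclusion-maximal face) of `Δ`. -/
def isFacet (Δ : SC n) (F : Finset (Fin n)) : Prop :=
  F ∈ Δ.faces ∧ ∀ G ∈ Δ.faces, F ⊆ G → F = G

/-- The dimension of `Δ` (as an integer, so that `dim {∅} = -1`). -/
def dim (Δ : SC n) : ℤ :=
  ((Δ.faces.sup Finset.card : ℕ) : ℤ) - 1

/-- `Δ` is pure: all facets have the same cardinality (hence dimension). -/
def Pure (Δ : SC n) : Prop :=
  ∀ F G : Finset (Fin n), Δ.isFacet F → Δ.isFacet G → F.card = G.card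

/-- The deletion `Δ_{-v}` of the vertex `v`. -/
noncomputable def del (Δ : SC n) (v : Fin n) : SC n where
  faces := Δ.faces.filter (fun F => v ∉ F)
  down := by
    intro F hF G hG
    simp only [Finset.mem_filter] at *
    exact ⟨Δ.down F hF.1 G hG, fun hv => hF.2 (hG hv)⟩
  empty_mem := by simp [Δ.empty_mem]

/-- The link `link_Δ(v)` of the vertex `v`. -/
noncomputable def link (Δ : SC n) (v : Fin n) : SC n where
  faces := insert ∅ (Δ.faces.filter (fun F => v ∉ F ∧ insert v F ∈ Δ.faces))
  down := by
    intro F hF G hG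
    simp only [Finset.mem_insert, Finset.mem_filter] at *
    rcases hF with h | ⟨h1, h2, h3⟩
    · left; subst h; exact Finset.subset_empty.mp hG
    · right
      exact ⟨Δ.down F h1 G hG, fun hv => h2 (hG hv),
        Δ.down _ h3 _ (Finset.insert_subset_insert v hG)⟩
  empty_mem := by simp

/-- The link `link_Δ(S)` of a face `S`. -/
noncomputable def linkF (Δ : SC n) (S : Finset (Fin n)) : SC n where
  faces := insert ∅ (Δ.faces.filter (fun G => G ∩ S = ∅ ∧ G ∪ S ∈ Δ.faces))
  down := by
    intro F hF G hG
    simp only [Finset.mem_insert, Finset.mem_filter] at *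
    rcases hF with h | ⟨h1, h2, h3⟩
    · left; subst h; exact Finset.subset_empty.mp hG
    · right
      refine ⟨Δ.down F h1 G hG, ?_, Δ.down _ h3 _ (Finset.union_subset_union_left hG)⟩
      apply Finset.eq_empty_of_forall_notMem
      intro x hx
      simp only [Finset.mem_inter] at hx
      have : x ∈ F ∩ S := Finset.mem_inter.mpr ⟨hG hx.1, hx.2⟩
      simp [h2] at this
  empty_mem := by simp

/-- The restriction `Δ|_σ`. -/
noncomputable def restrict (Δ : SC n) (σ : Finset (Fin n)) : SC n where
  faces := Δ.faces.filter (fun F => F ⊆ σ)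
  down := by
    intro F hF G hG
    simp only [Finset.mem_filter] at *
    exact ⟨Δ.down F hF.1 G hG, hG.trans hF.2⟩
  empty_mem := by simp [Δ.empty_mem]

/-- The subcomplex `Δ_{⟨-v⟩}` generated by the facets of `Δ` not containing `v`. -/
noncomputable def genDel (Δ : SC n) (v : Fin n) : SC n where
  faces := insert ∅ (Δ.faces.filter (fun G => ∃ F ∈ Δ.faces, Δ.isFacet F ∧ v ∉ F ∧ G ⊆ F))
  down := by
    intro F hF G hG
    simp only [Finset.mem_insert, Finset.mem_filter] at *
    rcases hF with h | ⟨h1, F', hF'⟩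
    · left; subst h; exact Finset.subset_empty.mp hG
    · right
      exact ⟨Δ.down F h1 G hG, F', hF'.1, hF'.2.1, hF'.2.2.1, hG.trans hF'.2.2.2⟩
  empty_mem := by simp

/-- `Δ` is a cone with apex `v`: every facet contains `v`. -/
def IsCone (Δ : SC n) (v : Fin n) : Prop :=
  ∀ F, Δ.isFacet F → v ∈ F

end SC

section Margins

variable {n : ℕ}

/-- The `F`-margin of a table `T`, evaluated at the assignment `a` on `F`:
the sum of the entries of `T` over all cells agreeing with `a` on `F`. -/
def margin {R : Type*} [AddCommMonoid R] (d : Fin n → ℕ) (T : (∀ j, Fin (d j)) → R)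
    (F : Finset (Fin n)) (a : ∀ j, Fin (d j)) : R :=
  ∑ b ∈ Finset.univ.filter (fun b : ∀ j, Fin (d j) => ∀ j ∈ F, b j = a j), T b

/-- `T` lies in the kernel of the marginal (design) matrix `M(Δ,d)` of the
hierarchical model: all margins along facets of `Δ` vanish. -/
def inKer {R : Type*} [AddCommMonoid R] (Δ : SC n) (d : Fin n → ℕ)
    (T : (∀ j, Fin (d j)) → R) : Prop :=
  ∀ F : Finset (Fin n), Δ.isFacet F → ∀ a, margin d T F a = 0

end Margins
section Cohomology

variable {n : ℕ}

/-- Reduced simplicial cochains "of size `s`" (i.e. cohomological degree `s-1`):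
functions on the faces of `Δ` with `s` vertices, with values in `K`.
For `s = 0` this is the span of the empty face. -/
abbrev Cch (Δ : SC n) (K : Type) [Field K] (s : ℕ) : Type :=
  {F : Finset (Fin n) // F ∈ Δ.faces ∧ F.card = s} → K

/-- The simplicial coboundary map from cochains of size `s` (degree `s-1`)
to cochains of size `s+1` (degree `s`), with the usual signs. -/
noncomputable def deltaLin (Δ : SC n) (K : Type) [Field K] (s : ℕ) :
    Cch Δ K s →ₗ[K] Cch Δ K (s + 1) where
  toFun φ := fun F => ∑ v ∈ F.1.attach,
    ((-1 : K) ^ ((F.1.filter (fun w => w < v.1)).card)) *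
      φ ⟨F.1.erase v.1,
        ⟨Δ.down F.1 F.2.1 _ (Finset.erase_subset _ _), by
          simp [Finset.card_erase_of_mem v.2, F.2.2]⟩⟩
  map_add' φ ψ := by
    funext F
    simp only [Pi.add_apply, mul_add, Finset.sum_add_distrib]
  map_smul' c φ := by
    funext F
    simp only [Pi.smul_apply, smul_eq_mul, RingHom.id_apply, Finset.mul_sum]
    exact Finset.sum_congr rfl (fun v _ => by ring)

/-- The reduced simplicial cohomology `H̃^j(Δ; K)` (for `j ≥ 0`) is nonzero:
there is a `j`-cocycle which is not a coboundary. -/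
def HredNe (Δ : SC n) (K : Type) [Field K] (j : ℕ) : Prop :=
  ∃ φ : Cch Δ K (j + 1), deltaLin Δ K (j + 1) φ = 0 ∧
    ∀ ψ : Cch Δ K j, deltaLin Δ K j ψ ≠ φ

/-- The reduced simplicial cohomology `H̃^j(Δ; K)` is one-dimensional (`≅ K`). -/
def HOneDim (Δ : SC n) (K : Type) [Field K] (j : ℕ) : Prop :=
  ∃ φ : Cch Δ K (j + 1), deltaLin Δ K (j + 1) φ = 0 ∧
    (∀ ψ : Cch Δ K j, deltaLin Δ K j ψ ≠ φ) ∧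
    ∀ φ' : Cch Δ K (j + 1), deltaLin Δ K (j + 1) φ' = 0 →
      ∃ (c : K) (ψ : Cch Δ K j), φ' = c • φ + deltaLin Δ K j ψ

/-- `dim_K H̃^{s-1}(Δ; K)`, computed from the cochain complex. -/
noncomputable def hdim (Δ : SC n) (K : Type) [Field K] (s : ℕ) : ℕ :=
  Module.finrank K (LinearMap.ker (deltaLin Δ K s)) -
    (if s = 0 then 0 else Module.finrank K (LinearMap.range (deltaLin Δ K (s - 1))))

/-- The graded Betti number `β_{i,j}` of the Stanley-Reisner ring of `Δ`,
over the polynomial ring on the variables indexed by `W`, as given by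
Hochster's formula: `β_{i,j}(R/I_Δ) = Σ_{σ ⊆ W, |σ|=j} dim_K H̃^{j-i-1}(Δ|_σ; K)`. -/
noncomputable def bettiOn (W : Finset (Fin n)) (Δ : SC n) (K : Type) [Field K]
    (i j : ℕ) : ℕ :=
  ∑ σ ∈ W.powerset.filter (fun σ => σ.card = j), hdim (Δ.restrict σ) K (j - i)

/-- Reisner's criterion: `Δ` is Cohen-Macaulay over `K` iff for every face `F`,
the reduced cohomology of `link_Δ(F)` vanishes below its dimension. -/
def IsCM (Δ : SC n) (K : Type) [Field K] : Prop :=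
  ∀ F ∈ Δ.faces, ∀ i : ℕ, (i : ℤ) < (Δ.linkF F).dim → ¬ HredNe (Δ.linkF F) K i

/-- `Δ` is disconnected (equivalently, `H̃^0(Δ;K) ≠ 0`): its vertex set splits into
two nonempty parts with no edge between them. -/
def Disconn (Δ : SC n) : Prop :=
  ∃ A B : Finset (Fin n),
    (∃ a ∈ A, ({a} : Finset (Fin n)) ∈ Δ.faces) ∧
    (∃ b ∈ B, ({b} : Finset (Fin n)) ∈ Δ.faces) ∧
    Disjoint A B ∧ (∀ w : Fin n, ({w} : Finset (Fin n)) ∈ Δ.faces → w ∈ A ∪ B) ∧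
    ∀ a ∈ A, ∀ b ∈ B, ({a, b} : Finset (Fin n)) ∉ Δ.faces

end Cohomology
section VD

variable {n : ℕ}

/-- Vertex decomposability: `Δ` is pure, and is either `{∅}` or has a vertex `v`
whose deletion and link are both vertex decomposable. -/
inductive IsVD : {n : ℕ} → SC n → Prop
  | triv {n : ℕ} (Δ : SC n) (h : Δ.faces = {∅}) : IsVD Δ
  | step {n : ℕ} (Δ : SC n) (hp : Δ.Pure) (v : Fin n)
      (hd : IsVD (Δ.del v)) (hl : IsVD (Δ.link v)) : IsVD Δ

/-- `Δ` is shellable: its facets admit an ordering `F_1, …, F_t` such that for each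
`k ≥ 2` the complex `(⋃_{i<k} ⟨F_i⟩) ∩ ⟨F_k⟩` is pure of dimension `dim F_k - 1`,
i.e. every face of it is contained in a face of it of cardinality `|F_k| - 1`. -/
def Shellable (Δ : SC n) : Prop :=
  ∃ L : List (Finset (Fin n)), L.Nodup ∧ (∀ F, Δ.isFacet F ↔ F ∈ L) ∧
    ∀ (k : ℕ) (hk : k < L.length), 0 < k →
      ∀ G : Finset (Fin n), G ⊆ L.get ⟨k, hk⟩ →
        (∃ (i : ℕ) (hi : i < L.length), i < k ∧ G ⊆ L.get ⟨i, hi⟩) →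
        ∃ G' : Finset (Fin n), G ⊆ G' ∧ G' ⊆ L.get ⟨k, hk⟩ ∧
          G'.card = (L.get ⟨k, hk⟩).card - 1 ∧
          ∃ (i : ℕ) (hi : i < L.length), i < k ∧ G' ⊆ L.get ⟨i, hi⟩

end VD

section Ideals

variable {n : ℕ}

/-- The Stanley-Reisner ideal of `Δ`: the ideal of `K[x_1,…,x_n]` generated by the
squarefree monomials `x_σ = ∏_{i ∈ σ} x_i` for the non-faces `σ ∉ Δ`. -/
noncomputable def SRideal (K : Type) [Field K] (Δ : SC n) : Ideal (MvPolynomial (Fin n) K) :=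
  Ideal.span ((fun σ : Finset (Fin n) => ∏ i ∈ σ, (MvPolynomial.X i : MvPolynomial (Fin n) K)) ''
    {σ : Finset (Fin n) | σ ∉ Δ.faces})

end Ideals

section Misc

/-- The trivial complex `{∅}` on `[n]`. -/
noncomputable def trivialSC (n : ℕ) : SC n where
  faces := {∅}
  down := by
    intro F hF G hG
    simp only [Finset.mem_singleton] at *
    subst hF
    exact Finset.subset_empty.mp hG
  empty_mem := by simp

/-- The alternating 0-1 vector `ε_k` with blocks of length `k`: entry `i` is the
parity of `i / k`, so it consists of alternating blocks of `k` zeros and `k` ones. -/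
def epsFun (k i : ℕ) : ℕ := (i / k) % 2

/-- The vector `α` defined by `α_1 = (0)` and `α_d = (α_{d-1}, complement α_{d-1})`:
entry `i` is the parity of the binary digit sum of `i` (Thue–Morse). -/
def alphaFun (i : ℕ) : ℕ := (Nat.digits 2 i).sum % 2

end Misc

section AuxForToric

open Finset
open scoped Classical

variable {n : ℕ}

lemma margin_subset' {R : Type*} [AddCommMonoid R] {d : Fin n → ℕ}
    (T : (∀ j, Fin (d j)) → R) {G F : Finset (Fin n)} (hGF : G ⊆ F)
    (a : ∀ j, Fin (d j)) :
    margin d T G a =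
      ∑ a' ∈ Finset.univ.filter
        (fun a' : ∀ j, Fin (d j) => (∀ j ∈ G, a' j = a j) ∧ ∀ j ∉ F, a' j = a j),
        margin d T F a' := by
  classical
  unfold margin
  rw [← Finset.sum_fiberwise_of_maps_to
    (g := fun b : ∀ j, Fin (d j) => fun j => if j ∈ F then b j else a j)
    (t := Finset.univ.filter
      (fun a' : ∀ j, Fin (d j) => (∀ j ∈ G, a' j = a j) ∧ ∀ j ∉ F, a' j = a j)) ?_ T]
  · refine Finset.sum_congr rfl ?_
    intro a' ha'
    simp only [Finset.mem_filter, Finset.mem_univ, true_and] at ha'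
    refine Finset.sum_congr ?_ (fun _ _ => rfl)
    ext b
    simp only [Finset.mem_filter, Finset.mem_univ, true_and]
    constructor
    · rintro ⟨hbG, hb⟩ j hjF
      have := congrFun hb j
      simp only [if_pos hjF] at this
      exact this
    · intro hbF
      constructor
      · intro j hj
        rw [hbF j (hGF hj), ha'.1 j hj]
      · funext j
        by_cases hj : j ∈ F
        · simp [hj, hbF j hj]
        · simp [hj, ha'.2 j hj]
  · intro b hb
    simp only [Finset.mem_filter, Finset.mem_univ, true_and] at hb ⊢
    constructor
    · intro j hj
      simp [hGF hj, hb j hj]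
    · intro j hj
      simp [hj]

lemma margin_sub_cast' {d : Fin n → ℕ} (u v : (∀ j, Fin (d j)) → ℕ)
    (G : Finset (Fin n)) (a : ∀ j, Fin (d j)) :
    margin d (fun b => (u b : ℤ) - v b) G a
      = ((margin d u G a : ℕ) : ℤ) - ((margin d v G a : ℕ) : ℤ) := by
  unfold margin
  push_cast
  rw [Finset.sum_sub_distrib]

lemma key_lemma' (m : ℕ) : ∀ {n : ℕ} (d : Fin n → ℕ) (T : (∀ j, Fin (d j)) → ℤ),
    (∀ G : Finset (Fin n), G.card ≤ m → ∀ a, margin d T G a = 0) → T ≠ 0 →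
    (2 : ℤ) ^ m ≤ ∑ b, max (T b) 0 := by
  induction m with
  | zero =>
    intro n d T hm hT
    by_cases hne : Nonempty (∀ j, Fin (d j))
    · obtain ⟨a₀⟩ := hne
      have htot : ∑ b, T b = 0 := by
        have := hm ∅ (by simp) a₀
        unfold margin at this
        simpa using this
      obtain ⟨b₀, hb₀⟩ : ∃ b, T b ≠ 0 := by
        by_contra h
        push_neg at h
        exact hT (funext h)
      obtain ⟨b₁, hb₁⟩ : ∃ b, 0 < T b := by
        by_contra h
        push_neg at h
        have := (Finset.sum_eq_zero_iff_of_nonpos (fun b _ => h b)).mp htot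
        exact hb₀ (this b₀ (Finset.mem_univ _))
      calc (2:ℤ)^0 = 1 := by norm_num
        _ ≤ max (T b₁) 0 := by simp [le_max_iff]; omega
        _ ≤ ∑ b, max (T b) 0 :=
          Finset.single_le_sum (f := fun b => max (T b) 0)
            (fun b _ => le_max_right _ _) (Finset.mem_univ b₁)
    · exact absurd (funext fun b => absurd ⟨b⟩ hne) hT
  | succ m ih =>
    intro n d T hm hT
    obtain ⟨b₀, hb₀⟩ : ∃ b, T b ≠ 0 := by
      by_contra h
      push_neg at h
      exact hT (funext h)
    by_cases hsplit : ∃ (j : Fin n) (c c' : Fin (d j)), c ≠ c' ∧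
        (∃ b, b j = c ∧ T b ≠ 0) ∧ (∃ b, b j = c' ∧ T b ≠ 0)
    · obtain ⟨j, c, c', hcc, ⟨bc, hbc, hbc0⟩, ⟨bc', hbc', hbc0'⟩⟩ := hsplit
      set Tc : Fin (d j) → (∀ i, Fin (d i)) → ℤ :=
        fun c0 b => if b j = c0 then T b else 0 with hTcdef
      have hmarg : ∀ (c0 : Fin (d j)) (G : Finset (Fin n)), G.card ≤ m →
          ∀ a, margin d (Tc c0) G a = 0 := by
        intro c0 G hG a
        by_cases hjG : j ∈ G
        · unfold margin
          by_cases hac : a j = c0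
          · have : ∀ b ∈ Finset.univ.filter
                (fun b : ∀ i, Fin (d i) => ∀ i ∈ G, b i = a i), Tc c0 b = T b := by
              intro b hb
              simp only [Finset.mem_filter, Finset.mem_univ, true_and] at hb
              simp [hTcdef, hb j hjG, hac]
            rw [Finset.sum_congr rfl this]
            exact hm G (hG.trans (Nat.le_succ m)) a
          · refine Finset.sum_eq_zero ?_
            intro b hb
            simp only [Finset.mem_filter, Finset.mem_univ, true_and] at hb
            have : b j ≠ c0 := by rw [hb j hjG]; exact hac
            simp [hTcdef, this]
        · have key : margin d (Tc c0) G a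
              = margin d T (insert j G) (Function.update a j c0) := by
            unfold margin
            rw [Finset.sum_filter]
            rw [Finset.sum_filter]
            refine Finset.sum_congr rfl ?_
            intro b _
            by_cases h1 : ∀ i ∈ G, b i = a i
            · simp only [if_pos h1, hTcdef]
              by_cases h2 : b j = c0
              · have : ∀ i ∈ insert j G, b i = Function.update a j c0 i := by
                  intro i hi
                  rcases Finset.mem_insert.mp hi with h | h
                  · subst h; simp [h2]
                  · have : i ≠ j := fun he => hjG (he ▸ h)
                    simp [Function.update_of_ne this, h1 i h]
                rw [if_pos this, if_pos h2]
              · have : ¬ ∀ i ∈ insert j G, b i = Function.update a j c0 i := by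
                  intro hall
                  have := hall j (Finset.mem_insert_self _ _)
                  simp at this
                  exact h2 this
                rw [if_neg this, if_neg h2]
            · have : ¬ ∀ i ∈ insert j G, b i = Function.update a j c0 i := by
                intro hall
                apply h1
                intro i hi
                have := hall i (Finset.mem_insert_of_mem hi)
                have hij : i ≠ j := fun he => hjG (he ▸ hi)
                rwa [Function.update_of_ne hij] at this
              rw [if_neg h1, if_neg this]
          rw [key]
          exact hm (insert j G) (by
            rw [Finset.card_insert_of_notMem hjG]; omega) _
      have hTc_ne : Tc c ≠ 0 := by
        intro h
        have := congrFun h bc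
        simp [hTcdef, hbc] at this
        exact hbc0 this
      have hTc'_ne : Tc c' ≠ 0 := by
        intro h
        have := congrFun h bc'
        simp [hTcdef, hbc'] at this
        exact hbc0' this
      have h1 := ih d (Tc c) (hmarg c) hTc_ne
      have h2 := ih d (Tc c') (hmarg c') hTc'_ne
      have hsum : ∑ b, max (Tc c b) 0 + ∑ b, max (Tc c' b) 0 ≤ ∑ b, max (T b) 0 := by
        rw [← Finset.sum_add_distrib]
        refine Finset.sum_le_sum ?_
        intro b _
        by_cases h : b j = c
        · have h' : b j ≠ c' := h ▸ hcc
          simp [hTcdef, h, h', hcc]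
        · by_cases h' : b j = c'
          · have hcc' : c' ≠ c := Ne.symm hcc
            simp [hTcdef, h, h', hcc']
          · simp [hTcdef, h, h', le_max_right]
      calc (2:ℤ)^(m+1) = 2^m + 2^m := by ring
        _ ≤ ∑ b, max (Tc c b) 0 + ∑ b, max (Tc c' b) 0 := add_le_add h1 h2
        _ ≤ ∑ b, max (T b) 0 := hsum
    · exfalso
      have honly : ∀ b, T b ≠ 0 → b = b₀ := by
        intro b hb
        funext j
        by_contra hne
        exact hsplit ⟨j, b j, b₀ j, hne, ⟨b, rfl, hb⟩, ⟨b₀, rfl, hb₀⟩⟩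
      have htot : ∑ b, T b = 0 := by
        have := hm ∅ (by simp) b₀
        unfold margin at this
        simpa using this
      rw [Finset.sum_eq_single b₀ (fun b _ hb => by
        by_contra h
        exact hb (honly b h)) (by simp)] at htot
      exact hb₀ htot

lemma even_powerset_card' {α : Type*} [DecidableEq α] (F : Finset α) (hF : F.Nonempty) :
    (F.powerset.filter (fun S => S.card % 2 = 0)).card = 2 ^ (F.card - 1) := by
  classical
  set E := F.powerset.filter (fun S => S.card % 2 = 0) with hE
  set O := F.powerset.filter (fun S => ¬ S.card % 2 = 0) with hO
  have htot : E.card + O.card = 2 ^ F.card := by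
    rw [hE, hO, Finset.card_filter_add_card_filter_not, Finset.card_powerset]
  have hdiff : (E.card : ℤ) - O.card = 0 := by
    have h0 : ∑ S ∈ F.powerset, (-1 : ℤ) ^ S.card = 0 := by
      rw [Finset.sum_powerset_neg_one_pow_card, if_neg (Finset.nonempty_iff_ne_empty.mp hF)]
    rw [← Finset.sum_filter_add_sum_filter_not F.powerset (fun S => S.card % 2 = 0)] at h0
    have hE1 : ∑ S ∈ E, (-1 : ℤ) ^ S.card = E.card := by
      rw [Finset.sum_congr rfl (fun S hS => ?_), Finset.sum_const, nsmul_eq_mul, mul_one]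
      have : Even S.card := by
        simp only [hE, Finset.mem_filter] at hS
        exact Nat.even_iff.mpr hS.2
      exact Even.neg_one_pow this
    have hO1 : ∑ S ∈ O, (-1 : ℤ) ^ S.card = -O.card := by
      rw [Finset.sum_congr rfl (fun S hS => ?_), Finset.sum_const, nsmul_eq_mul, mul_neg_one]
      have : Odd S.card := by
        simp only [hO, Finset.mem_filter] at hS
        exact Nat.odd_iff.mpr (by omega)
      exact Odd.neg_one_pow this
    rw [hE1, hO1] at h0
    linarith
  have hEO : E.card = O.card := by exact_mod_cast sub_eq_zero.mp hdiff
  have hk : 1 ≤ F.card := Finset.card_pos.mpr hF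
  have : 2 ^ F.card = 2 * 2 ^ (F.card - 1) := by
    rw [← pow_succ']
    congr 1
    omega
  omega

section Constr

variable (d : Fin n → ℕ) (F : Finset (Fin n))

noncomputable def zc (hd : ∀ j, 2 ≤ d j) (j : Fin n) : Fin (d j) := ⟨0, by have := hd j; omega⟩
noncomputable def oc (hd : ∀ j, 2 ≤ d j) (j : Fin n) : Fin (d j) := ⟨1, by have := hd j; omega⟩

def Pp (p : ℕ) (b : ∀ j, Fin (d j)) : Prop :=
  (∀ j, j ∉ F → (b j : ℕ) = 0) ∧ (∀ j ∈ F, (b j : ℕ) ≤ 1) ∧ (∑ j ∈ F, (b j : ℕ)) % 2 = p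

lemma sum_eq_card_filter (b : ∀ j, Fin (d j)) (hb : ∀ j ∈ F, (b j : ℕ) ≤ 1) :
    ∑ j ∈ F, (b j : ℕ) = (F.filter (fun j => (b j : ℕ) = 1)).card := by
  rw [Finset.card_filter]
  refine Finset.sum_congr rfl ?_
  intro j hj
  have := hb j hj
  by_cases h : (b j : ℕ) = 1 <;> simp [h] <;> omega

lemma total_count (hd : ∀ j, 2 ≤ d j) (hF : F.Nonempty) :
    ∑ b : ∀ j, Fin (d j), (if Pp d F 0 b then 1 else 0 : ℕ) = 2 ^ (F.card - 1) := by
  classical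
  rw [Finset.sum_boole, Nat.cast_id]
  rw [show (Finset.univ.filter (fun b : ∀ j, Fin (d j) => Pp d F 0 b)).card
      = (F.powerset.filter (fun S => S.card % 2 = 0)).card from ?_]
  · exact even_powerset_card' F hF
  refine Finset.card_bij' (fun b _ => F.filter (fun j => (b j : ℕ) = 1))
    (fun S _ => fun j => if j ∈ S then oc d hd j else zc d hd j) ?_ ?_ ?_ ?_
  · intro b hb
    simp only [Finset.mem_filter, Finset.mem_univ, true_and] at hb
    simp only [Finset.mem_filter, Finset.mem_powerset]
    exact ⟨Finset.filter_subset _ _, by rw [← sum_eq_card_filter d F b hb.2.1]; exact hb.2.2⟩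
  · intro S hS
    simp only [Finset.mem_filter, Finset.mem_powerset] at hS
    simp only [Finset.mem_filter, Finset.mem_univ, true_and]
    have hval : ∀ j, ((if j ∈ S then oc d hd j else zc d hd j : Fin (d j)) : ℕ)
        = if j ∈ S then 1 else 0 := by
      intro j
      by_cases h : j ∈ S <;> simp [h, oc, zc]
    refine ⟨fun j hj => ?_, fun j _ => ?_, ?_⟩
    · rw [hval]
      have : j ∉ S := fun h => hj (hS.1 h)
      simp [this]
    · rw [hval]
      by_cases h : j ∈ S <;> simp [h]
    · have : ∑ j ∈ F, ((if j ∈ S then oc d hd j else zc d hd j : Fin (d j)) : ℕ)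
          = S.card := by
        rw [Finset.sum_congr rfl (fun j _ => hval j)]
        simp [Finset.sum_ite_mem, Finset.inter_eq_right.mpr hS.1]
      rw [this]
      exact hS.2
  · intro b hb
    simp only [Finset.mem_filter, Finset.mem_univ, true_and] at hb
    funext j
    by_cases h : j ∈ F.filter (fun j => (b j : ℕ) = 1)
    · simp only [if_pos h]
      simp only [Finset.mem_filter] at h
      exact Fin.ext (by simp [oc, h.2])
    · simp only [if_neg h]
      simp only [Finset.mem_filter] at h
      refine Fin.ext ?_
      simp only [zc]
      by_cases hjF : j ∈ F
      · have := hb.2.1 j hjF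
        have h2 : ¬ (b j : ℕ) = 1 := fun hc => h ⟨hjF, hc⟩
        omega
      · simp [hb.1 j hjF]
  · intro S hS
    simp only [Finset.mem_filter, Finset.mem_powerset] at hS
    ext j
    simp only [Finset.mem_filter]
    constructor
    · rintro ⟨hjF, hj1⟩
      by_cases h : j ∈ S
      · exact h
      · simp [h, zc] at hj1
    · intro h
      exact ⟨hS.1 h, by simp [h, oc]⟩

lemma margin_flip (hd : ∀ j, 2 ≤ d j) {i : Fin n} (hiF : i ∈ F) {G : Finset (Fin n)}
    (hiG : i ∉ G) (a : ∀ j, Fin (d j)) :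
    margin d (fun b => if Pp d F 0 b then (1:ℕ) else 0) G a
      = margin d (fun b => if Pp d F 1 b then (1:ℕ) else 0) G a := by
  classical
  unfold margin
  rw [Finset.sum_boole, Finset.sum_boole, Nat.cast_id, Nat.cast_id]
  set flip : (∀ j, Fin (d j)) → (∀ j, Fin (d j)) :=
    fun b => Function.update b i (if (b i : ℕ) = 0 then oc d hd i else zc d hd i) with hflip
  have hvo : ∀ b (j : Fin n), j ≠ i → flip b j = b j := by
    intro b j hj
    simp [hflip, Function.update_of_ne hj]
  have hvi : ∀ b, ((flip b i : ℕ)) = if (b i : ℕ) = 0 then 1 else 0 := by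
    intro b
    by_cases h : (b i : ℕ) = 0 <;> simp [hflip, h, oc, zc]
  have hstep : ∀ p q, p + q = 1 → ∀ b, (∀ j ∈ G, b j = a j) → Pp d F p b →
      (∀ j ∈ G, flip b j = a j) ∧ Pp d F q (flip b) := by
    rintro p q hpq b hag ⟨h1, h2, h3⟩
    have hsum : ∀ b' : ∀ j, Fin (d j),
        (∑ j ∈ F, (b' j : ℕ)) = (b' i : ℕ) + ∑ j ∈ F.erase i, (b' j : ℕ) :=
      fun b' => (Finset.add_sum_erase F _ hiF).symm
    refine ⟨fun j hj => by
        rw [hvo b j (fun he => hiG (he ▸ hj))]; exact hag j hj, fun j hj => ?_,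
      fun j hjF => ?_, ?_⟩
    · have hji : j ≠ i := fun he => hj (he ▸ hiF)
      rw [hvo b j hji]
      exact h1 j hj
    · by_cases hji : j = i
      · subst hji
        rw [hvi b]
        split_ifs <;> omega
      · rw [hvo b j hji]
        exact h2 j hjF
    · rw [hsum (flip b)]
      rw [Finset.sum_congr rfl (fun j hj => by
        rw [hvo b j (Finset.ne_of_mem_erase hj)])]
      rw [hsum b] at h3
      rw [hvi b]
      have hble := h2 i hiF
      split_ifs with h <;> omega
  have hinv : ∀ b : ∀ j, Fin (d j), (∀ j ∈ F, (b j : ℕ) ≤ 1) → flip (flip b) = b := by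
    intro b hb
    funext j
    by_cases hj : j = i
    · subst hj
      refine Fin.ext ?_
      rw [hvi (flip b), hvi b]
      have := hb j hiF
      rcases Nat.le_one_iff_eq_zero_or_eq_one.mp this with h | h <;> simp [h]
    · rw [hvo (flip b) j hj, hvo b j hj]
  refine Finset.card_bij' (fun b _ => flip b) (fun b _ => flip b) ?_ ?_ ?_ ?_
  · intro b hb
    simp only [Finset.mem_filter, Finset.mem_univ, true_and] at hb ⊢
    obtain ⟨h1, h2⟩ := hstep 0 1 rfl b hb.1 hb.2
    exact ⟨h1, h2⟩
  · intro b hb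
    simp only [Finset.mem_filter, Finset.mem_univ, true_and] at hb ⊢
    obtain ⟨h1, h2⟩ := hstep 1 0 rfl b hb.1 hb.2
    exact ⟨h1, h2⟩
  · intro b hb
    simp only [Finset.mem_filter, Finset.mem_univ, true_and] at hb
    exact hinv b hb.2.2.1
  · intro b hb
    simp only [Finset.mem_filter, Finset.mem_univ, true_and] at hb
    exact hinv b hb.2.2.1

lemma Pp_zc (hd : ∀ j, 2 ≤ d j) : Pp d F 0 (fun j => zc d hd j) := by
  refine ⟨fun j _ => rfl, fun j _ => by simp [zc], by simp [zc]⟩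

lemma not_Pp_one_zc (hd : ∀ j, 2 ≤ d j) : ¬ Pp d F 1 (fun j => zc d hd j) := by
  rintro ⟨-, -, h⟩
  simp [zc] at h

end Constr

lemma SC.exists_facet (Δ : SC n) {G : Finset (Fin n)} (hG : G ∈ Δ.faces) :
    ∃ F, Δ.isFacet F ∧ G ⊆ F := by
  classical
  obtain ⟨F, hF, hmax⟩ := Finset.exists_max_image (Δ.faces.filter (fun H => G ⊆ H))
    Finset.card ⟨G, by simp [hG]⟩
  simp only [Finset.mem_filter] at hF
  refine ⟨F, ⟨hF.1, ?_⟩, hF.2⟩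
  intro H hH hFH
  exact Finset.eq_of_subset_of_card_le hFH (hmax H (by simp [hH, hF.2.trans hFH]))

end AuxForToric

/-- If every `d_i ≥ 2` and `k` is the smallest cardinality of a
non-face of `Δ` (the initial degree of `I_Δ`), then the smallest degree of a nonzero
binomial `x^u - x^v` in the toric ideal `I_{M(Δ,d)}` is `2^(k-1)`. -/
theorem initial_degree_toric {n : ℕ} (Δ : SC n) (d : Fin n → ℕ) (hd : ∀ j, 2 ≤ d j)
    (k : ℕ) (hk : IsLeast {m : ℕ | ∃ F : Finset (Fin n), F ∉ Δ.faces ∧ F.card = m} k) :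
    IsLeast {D : ℕ | ∃ u v : (∀ j, Fin (d j)) → ℕ, u ≠ v ∧
        (∀ F : Finset (Fin n), Δ.isFacet F → ∀ a, margin d u F a = margin d v F a) ∧
        D = ∑ b : ∀ j, Fin (d j), u b}
      (2 ^ (k - 1)) := by
  classical
  obtain ⟨⟨Fk, hFk, hFkcard⟩, hlb⟩ := hk
  have hk1 : 1 ≤ k := by
    rcases Nat.eq_zero_or_pos k with h | h
    · exfalso
      subst h
      rw [Finset.card_eq_zero] at hFkcard
      exact hFk (hFkcard ▸ Δ.empty_mem)
    · exact h
  constructor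
  · refine ⟨fun b => if Pp d Fk 0 b then 1 else 0,
      fun b => if Pp d Fk 1 b then 1 else 0, ?_, ?_, ?_⟩
    · intro h
      have := congrFun h (fun j => zc d hd j)
      rw [if_pos (Pp_zc d Fk hd), if_neg (not_Pp_one_zc d Fk hd)] at this
      exact one_ne_zero this
    · intro G hG a
      have hnsub : ¬ Fk ⊆ G := fun hsub => hFk (Δ.down G hG.1 Fk hsub)
      obtain ⟨i, hiF, hiG⟩ := Finset.not_subset.mp hnsub
      exact margin_flip d Fk hd hiF hiG a
    · have hFne : Fk.Nonempty := Finset.card_pos.mp (by omega)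
      rw [total_count d Fk hd hFne, hFkcard]
  · rintro D ⟨u, v, huv, hmarg, rfl⟩
    set T : (∀ j, Fin (d j)) → ℤ := fun b => (u b : ℤ) - v b with hT
    have hTne : T ≠ 0 := by
      intro h
      apply huv
      funext b
      have := congrFun h b
      simp only [hT, Pi.zero_apply, sub_eq_zero] at this
      exact_mod_cast this
    have hTm : ∀ G : Finset (Fin n), G.card ≤ k - 1 → ∀ a, margin d T G a = 0 := by
      intro G hGc a
      have hGface : G ∈ Δ.faces := by
        by_contra h
        have := hlb ⟨G, h, rfl⟩
        omega
      obtain ⟨Fc, hFc, hGFc⟩ := Δ.exists_facet hGface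
      rw [margin_subset' T hGFc a]
      refine Finset.sum_eq_zero ?_
      intro a' _
      rw [hT, margin_sub_cast' u v Fc a', hmarg Fc hFc a', sub_self]
    have hkey := key_lemma' (k-1) d T hTm hTne
    have hle : ∑ b, max (T b) 0 ≤ ((∑ b : ∀ j, Fin (d j), u b : ℕ) : ℤ) := by
      rw [Nat.cast_sum]
      refine Finset.sum_le_sum ?_
      intro b _
      exact max_le (sub_le_self _ (by positivity)) (by positivity)
    have hfin : ((2:ℤ))^(k-1) ≤ ((∑ b : ∀ j, Fin (d j), u b : ℕ) : ℤ) :=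
      le_trans hkey hle
    exact_mod_cast hfin
end

section
/- Let Γ be the boundary of the n-simplex (the complex of all proper subsets of [n], n ≥ 2) and consider the binary hierarchical model (all d_i = 2). Then ker M(Γ,(2,…,2)) ∩ ℤ^{2^n} is the rank-one lattice spanned by the vector w ∈ ℤ^{2^n} whose coordinate at a cell b ∈ {0,1}^n is (−1)^{b_1+⋯+b_n}. Consequently the toric ideal I_M is principal, generated by a binomial of degree 2^{n−1}. -/
open Finset

open scoped Classical

section Aux

variable {n : ℕ}

lemma aux_fin2 : ∀ x : Fin 2, x = 0 ∨ x = 1 := by decide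

lemma aux_filter_eq (i : Fin n) (a : ∀ _ : Fin n, Fin 2) :
    Finset.univ.filter
        (fun b : ∀ _ : Fin n, Fin 2 => ∀ j ∈ Finset.univ.erase i, b j = a j)
      = {Function.update a i 0, Function.update a i 1} := by
  ext b
  simp only [Finset.mem_filter, Finset.mem_univ, true_and, Finset.mem_insert,
    Finset.mem_singleton, Finset.mem_erase, and_imp]
  constructor
  · intro h
    have hb : ∀ t : Fin 2, b i = t → b = Function.update a i t := by
      intro t ht
      funext j
      by_cases hj : j = i
      · subst hj; simp [Function.update_self, ht]
      · rw [Function.update_of_ne hj]; exact h j hj trivial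
    rcases aux_fin2 (b i) with h0 | h1
    · exact Or.inl (hb 0 h0)
    · exact Or.inr (hb 1 h1)
  · rintro (rfl | rfl) <;> intro j hj _ <;> rw [Function.update_of_ne hj]

lemma aux_margin (T : (∀ _ : Fin n, Fin 2) → ℤ) (i : Fin n) (a : ∀ _ : Fin n, Fin 2) :
    margin (fun _ => 2) T (Finset.univ.erase i) a
      = T (Function.update a i 0) + T (Function.update a i 1) := by
  unfold margin
  rw [aux_filter_eq]
  refine Finset.sum_pair ?_
  intro h
  have := congrFun h i
  simp only [Function.update_self] at this
  exact absurd this (by decide)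

lemma aux_facet (Γ : SC n)
    (hΓ : Γ.faces = Finset.univ.powerset.filter (fun F => F ≠ Finset.univ))
    (F : Finset (Fin n)) :
    Γ.isFacet F ↔ ∃ i, F = Finset.univ.erase i := by
  constructor
  · rintro ⟨hmem, hmax⟩
    rw [hΓ, Finset.mem_filter] at hmem
    obtain ⟨i, hi⟩ : ∃ i, i ∉ F := by
      by_contra h; push_neg at h
      exact hmem.2 (Finset.eq_univ_iff_forall.mpr h)
    refine ⟨i, ?_⟩
    by_cases hins : insert i F = Finset.univ
    · rw [← hins, Finset.erase_insert hi]
    · have hFi : F = insert i F := by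
        refine hmax _ ?_ (Finset.subset_insert _ _)
        rw [hΓ, Finset.mem_filter]
        exact ⟨Finset.mem_powerset.mpr (Finset.subset_univ _), hins⟩
      exact absurd (hFi ▸ Finset.mem_insert_self i F) hi
  · rintro ⟨i, rfl⟩
    constructor
    · rw [hΓ, Finset.mem_filter]
      refine ⟨Finset.mem_powerset.mpr (Finset.subset_univ _), ?_⟩
      intro h
      have : i ∈ Finset.univ.erase i := by rw [h]; exact Finset.mem_univ i
      simp at this
    · intro G hG hsub
      rw [hΓ, Finset.mem_filter] at hG
      by_cases hiG : i ∈ G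
      · exfalso
        apply hG.2
        apply Finset.eq_univ_iff_forall.mpr
        intro x
        by_cases hx : x = i
        · subst hx; exact hiG
        · exact hsub (Finset.mem_erase.mpr ⟨hx, Finset.mem_univ x⟩)
      · refine Finset.Subset.antisymm hsub (fun x hx => ?_)
        exact Finset.mem_erase.mpr ⟨fun h => hiG (h ▸ hx), Finset.mem_univ x⟩

lemma aux_split (i : Fin n) (c : ∀ _ : Fin n, Fin 2) :
    (∑ j, (c j : ℕ)) = (∑ j ∈ Finset.univ.erase i, (c j : ℕ)) + (c i : ℕ) :=
  (Finset.sum_erase_add _ _ (Finset.mem_univ i)).symm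

lemma aux_sum_update (i : Fin n) (a : ∀ _ : Fin n, Fin 2) (t : Fin 2) :
    (∑ j, ((Function.update a i t) j : ℕ))
      = (∑ j ∈ Finset.univ.erase i, (a j : ℕ)) + (t : ℕ) := by
  rw [aux_split i]
  congr 1
  · refine Finset.sum_congr rfl (fun j hj => ?_)
    rw [Function.update_of_ne (Finset.mem_erase.mp hj).1]
  · rw [Function.update_self]

lemma aux_key (T : (∀ _ : Fin n, Fin 2) → ℤ)
    (hflip : ∀ (i : Fin n) (a : ∀ _ : Fin n, Fin 2),
      T (Function.update a i 0) + T (Function.update a i 1) = 0) :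
    ∀ (k : ℕ) (b : ∀ _ : Fin n, Fin 2), (∑ j, (b j : ℕ)) = k →
      T b = T (fun _ => 0) * (-1) ^ k := by
  intro k
  induction k with
  | zero =>
    intro b hb
    have hb0 : b = fun _ => 0 := by
      funext j
      have := Finset.sum_eq_zero_iff.mp hb j (Finset.mem_univ j)
      exact Fin.ext (by simpa using this)
    simp [hb0]
  | succ k ih =>
    intro b hb
    obtain ⟨i, hi⟩ : ∃ i, b i = 1 := by
      by_contra h
      push_neg at h
      have h0 : ∀ i, b i = 0 := fun i => (aux_fin2 (b i)).resolve_right (h i)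
      simp [h0] at hb
    have hb' : b = Function.update b i 1 := by
      funext j
      by_cases hj : j = i
      · subst hj; simp [hi]
      · rw [Function.update_of_ne hj]
    have hsum : (∑ j, ((Function.update b i 0) j : ℕ)) = k := by
      rw [aux_sum_update]
      rw [aux_split i, hi] at hb
      simpa using Nat.succ_injective (by simpa using hb)
    have hTb : T b = - T (Function.update b i 0) := by
      have h := hflip i b
      rw [← hb'] at h
      linarith
    rw [hTb, ih _ hsum]
    ring

end Aux

/-- For the boundary `Γ` of the `n`-simplex (`n ≥ 2`) and the binary
model, the integer kernel of `M(Γ,(2,…,2))` is the rank-one lattice spanned by the sign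
vector `b ↦ (-1)^(b_1+⋯+b_n)`; the positive part of this generator has degree `2^(n-1)`,
so the toric ideal is principal, generated by a binomial of degree `2^(n-1)`. -/
theorem boundary_simplex_kernel {n : ℕ} (hn : 2 ≤ n) (Γ : SC n)
    (hΓ : Γ.faces = Finset.univ.powerset.filter (fun F => F ≠ Finset.univ)) :
    (∀ T : (∀ _ : Fin n, Fin 2) → ℤ,
      inKer Γ (fun _ => 2) T ↔
        ∃ c : ℤ, T = fun b => c * (-1) ^ (∑ j, (b j : ℕ))) ∧
    (∑ b : ∀ _ : Fin n, Fin 2, max ((-1 : ℤ) ^ (∑ j, (b j : ℕ))) 0 = 2 ^ (n - 1)) := by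
  constructor
  · intro T
    constructor
    · intro hT
      have hflip : ∀ (i : Fin n) (a : ∀ _ : Fin n, Fin 2),
          T (Function.update a i 0) + T (Function.update a i 1) = 0 := by
        intro i a
        rw [← aux_margin]
        exact hT _ ((aux_facet Γ hΓ _).mpr ⟨i, rfl⟩) a
      refine ⟨T (fun _ => 0), ?_⟩
      funext b
      exact aux_key T hflip _ b rfl
    · rintro ⟨c, rfl⟩
      intro F hF a
      obtain ⟨i, rfl⟩ := (aux_facet Γ hΓ _).mp hF
      rw [aux_margin]
      rw [aux_sum_update, aux_sum_update]
      simp only [Fin.val_zero, Fin.val_one, add_zero, pow_succ]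
      ring
  · have hsum0 : (∑ b : ∀ _ : Fin n, Fin 2, ((-1 : ℤ) ^ (∑ j, (b j : ℕ)))) = 0 := by
      have h1 : ∀ b : ∀ _ : Fin n, Fin 2,
          ((-1 : ℤ) ^ (∑ j, (b j : ℕ))) = ∏ j, (-1 : ℤ) ^ ((b j : ℕ)) := fun b =>
        (Finset.prod_pow_eq_pow_sum _ _ _).symm
      rw [Finset.sum_congr rfl (fun b _ => h1 b)]
      rw [← Fintype.piFinset_univ,
        ← Finset.prod_univ_sum (t := fun _ : Fin n => (Finset.univ : Finset (Fin 2)))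
          (f := fun _ t => ((-1 : ℤ)) ^ (t : ℕ))]
      have h2 : ∀ j : Fin n, (∑ t ∈ (Finset.univ : Finset (Fin 2)), (-1 : ℤ) ^ (t : ℕ)) = 0 :=
        fun _ => by decide
      rw [Finset.prod_congr rfl (fun j _ => h2 j), Finset.prod_const,
        Finset.card_univ, Fintype.card_fin]
      exact zero_pow (by omega)
    have h2max : ∀ s : ℕ, 2 * max ((-1 : ℤ) ^ s) 0 = 1 + (-1) ^ s := by
      intro s
      rcases Nat.even_or_odd s with h | h
      · rw [h.neg_one_pow]; norm_num
      · rw [h.neg_one_pow]; norm_num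
    have key : 2 * (∑ b : ∀ _ : Fin n, Fin 2, max ((-1 : ℤ) ^ (∑ j, (b j : ℕ))) 0)
        = 2 * 2 ^ (n - 1) := by
      rw [Finset.mul_sum, Finset.sum_congr rfl (fun b _ => h2max _),
        Finset.sum_add_distrib, hsum0, add_zero, Finset.sum_const]
      have hcard : (Finset.univ : Finset (∀ _ : Fin n, Fin 2)).card = 2 ^ n := by
        simp [Fintype.card_pi]
      rw [hcard]
      have e : n - 1 + 1 = n := Nat.sub_add_cancel (le_trans one_le_two hn)
      have : ((2 : ℕ) ^ n : ℤ) = 2 * 2 ^ (n - 1) := by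
        push_cast
        calc (2 : ℤ) ^ n = 2 ^ (n - 1 + 1) := by rw [e]
          _ = 2 * 2 ^ (n - 1) := by rw [pow_succ]; ring
      simpa using this
    exact mul_left_cancel₀ (by norm_num : (2 : ℤ) ≠ 0) key
end

section
/- Let Δ = Δ₁ ∪ Δ₂ be simplicial complexes on [n] such that S = Δ₁ ∩ Δ₂ is a simplex (the full power set of some subset of [n]) or empty. If for some j > 1 and σ ⊆ [n] the reduced cohomology H̃^{j−1}(Δ|_σ; K) is nonzero, then writing σ_i for the vertices of σ lying in Δ_i, either H̃^{j−1}(Δ₁|_{σ₁}; K) ≠ 0 or H̃^{j−1}(Δ₂|_{σ₂}; K) ≠ 0. -/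
open Finset

open scoped Classical

section Aux
variable {n : ℕ} (K : Type) [Field K]

noncomputable def msgn (F : Finset (Fin n)) (w : Fin n) : K :=
  (-1 : K) ^ ((F.filter (fun u => u < w)).card)

noncomputable def tf {Δ : SC n} (s : ℕ) (φ : Cch Δ K s) (G : Finset (Fin n)) : K :=
  if h : G ∈ Δ.faces ∧ G.card = s then φ ⟨G, h⟩ else 0

lemma tf_pos {Δ : SC n} {s : ℕ} (φ : Cch Δ K s) {G : Finset (Fin n)}
    (h : G ∈ Δ.faces ∧ G.card = s) : tf K s φ G = φ ⟨G, h⟩ := dif_pos h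

lemma tf_neg {Δ : SC n} {s : ℕ} (φ : Cch Δ K s) {G : Finset (Fin n)}
    (h : ¬ (G ∈ Δ.faces ∧ G.card = s)) : tf K s φ G = 0 := dif_neg h

lemma deltaLin_eq {Δ : SC n} (s : ℕ) (φ : Cch Δ K s)
    (F : {F : Finset (Fin n) // F ∈ Δ.faces ∧ F.card = s + 1}) :
    deltaLin Δ K s φ F = ∑ w ∈ F.1, msgn K F.1 w * tf K s φ (F.1.erase w) := by
  have : deltaLin Δ K s φ F = ∑ v ∈ F.1.attach,
      ((-1 : K) ^ ((F.1.filter (fun w => w < v.1)).card)) *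
      φ ⟨F.1.erase v.1,
        ⟨Δ.down F.1 F.2.1 _ (Finset.erase_subset _ _), by
          simp [Finset.card_erase_of_mem v.2, F.2.2]⟩⟩ := rfl
  rw [this, ← Finset.sum_attach F.1 (fun w => msgn K F.1 w * tf K s φ (F.1.erase w))]
  refine Finset.sum_congr rfl fun v _ => ?_
  rw [tf_pos K φ (G := F.1.erase v.1) ⟨Δ.down F.1 F.2.1 _ (Finset.erase_subset _ _), by
          simp [Finset.card_erase_of_mem v.2, F.2.2]⟩]
  rfl

lemma msgn_erase {F : Finset (Fin n)} {w v : Fin n} (hw : w ∈ F) :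
    msgn K (F.erase w) v = (if w < v then -1 else 1) * msgn K F v := by
  unfold msgn
  rw [Finset.filter_erase]
  by_cases h : w < v
  · have hmem : w ∈ F.filter (fun u => u < v) := Finset.mem_filter.mpr ⟨hw, h⟩
    rw [if_pos h, ← Finset.card_erase_add_one hmem, pow_succ]
    ring
  · rw [if_neg h, Finset.erase_eq_of_notMem
      (s := F.filter (fun u => u < v)) (a := w)
      (fun hmem => h (Finset.mem_filter.mp hmem).2), one_mul]

end Aux
section Aux2
variable {n : ℕ} (K : Type) [Field K]

lemma delta_delta {Δ : SC n} (s : ℕ) (φ : Cch Δ K s) :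
    deltaLin Δ K (s+1) (deltaLin Δ K s φ) = 0 := by
  funext F
  rw [deltaLin_eq]
  show _ = (0 : K)
  have hterm : ∀ w ∈ F.1, msgn K F.1 w * tf K (s+1) (deltaLin Δ K s φ) (F.1.erase w)
      = ∑ u ∈ F.1, (if u ≠ w then
          msgn K F.1 w * (msgn K (F.1.erase w) u * tf K s φ ((F.1.erase w).erase u)) else 0) := by
    intro w hw
    have hmem : F.1.erase w ∈ Δ.faces ∧ (F.1.erase w).card = s + 1 :=
      ⟨Δ.down _ F.2.1 _ (Finset.erase_subset _ _), by
        rw [Finset.card_erase_of_mem hw, F.2.2]; omega⟩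
    rw [tf_pos K _ hmem, deltaLin_eq K s φ ⟨F.1.erase w, hmem⟩]
    have : (∑ u ∈ F.1.erase w, msgn K (F.1.erase w) u * tf K s φ ((F.1.erase w).erase u))
        = ∑ u ∈ F.1.filter (fun u => u ≠ w),
            msgn K (F.1.erase w) u * tf K s φ ((F.1.erase w).erase u) := by
      rw [Finset.filter_ne']
    rw [this, Finset.sum_filter, Finset.mul_sum]
    refine Finset.sum_congr rfl fun u _ => ?_
    by_cases h : u ≠ w <;> simp [h]
  rw [Finset.sum_congr rfl hterm, ← Finset.sum_product']
  apply Finset.sum_involution (fun p _ => p.swap)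
  · intro p hp
    rcases eq_or_ne p.2 p.1 with h | h
    · simp [Prod.swap, h]
    · have hp1 : p.1 ∈ F.1 := (Finset.mem_product.mp hp).1
      have hp2 : p.2 ∈ F.1 := (Finset.mem_product.mp hp).2
      simp only [Prod.fst_swap, Prod.snd_swap, if_pos h, if_pos h.symm]
      rw [Finset.erase_right_comm (a := p.1) (b := p.2)]
      rw [msgn_erase K hp1, msgn_erase K hp2]
      rcases lt_or_gt_of_ne h with hlt | hlt
      · rw [if_neg (asymm hlt), if_pos hlt]; ring
      · rw [if_pos hlt, if_neg (asymm hlt)]; ring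
  · intro p hp hne
    intro hsw
    apply hne
    have : p.2 = p.1 := by
      have := congrArg Prod.fst hsw
      simpa using this
    simp [this]
  · intro p hp
    simp
  · intro p hp
    simp only [Finset.mem_product] at hp ⊢
    exact ⟨hp.2, hp.1⟩

noncomputable def resC {Δ' Δ : SC n} (hsub : Δ'.faces ⊆ Δ.faces) (s : ℕ) (φ : Cch Δ K s) :
    Cch Δ' K s := fun G => φ ⟨G.1, hsub G.2.1, G.2.2⟩

lemma res_delta {Δ' Δ : SC n} (hsub : Δ'.faces ⊆ Δ.faces) (s : ℕ) (φ : Cch Δ K s) :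
    deltaLin Δ' K s (resC K hsub s φ) = resC K hsub (s+1) (deltaLin Δ K s φ) := by
  funext F
  have hR : resC K hsub (s+1) (deltaLin Δ K s φ) F
      = deltaLin Δ K s φ ⟨F.1, hsub F.2.1, F.2.2⟩ := rfl
  rw [deltaLin_eq, hR, deltaLin_eq K s φ ⟨F.1, hsub F.2.1, F.2.2⟩]
  refine Finset.sum_congr rfl fun w hw => ?_
  congr 1
  have h1 : F.1.erase w ∈ Δ'.faces ∧ (F.1.erase w).card = s :=
    ⟨Δ'.down _ F.2.1 _ (Finset.erase_subset _ _), by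
      rw [Finset.card_erase_of_mem hw, F.2.2]; rfl⟩
  rw [tf_pos K _ h1, tf_pos K φ ⟨hsub h1.1, h1.2⟩]
  rfl

end Aux2
section Aux3
variable {n : ℕ} (K : Type) [Field K]

lemma simplex_exact {t : Finset (Fin n)} {P : SC n} (hP : P.faces = t.powerset) (s : ℕ)
    (χ : Cch P K (s+1)) (hχ : deltaLin P K (s+1) χ = 0) :
    ∃ η : Cch P K s, deltaLin P K s η = χ := by
  rcases Finset.eq_empty_or_nonempty t with rfl | ⟨v, hv⟩
  · refine ⟨0, funext fun F => ?_⟩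
    exact absurd F.2 (by
      rintro ⟨hf, hc⟩
      have h2 : F.1 ∈ (∅ : Finset (Fin n)).powerset := by rw [← hP]; exact hf
      rw [Finset.mem_powerset, Finset.subset_empty] at h2
      simp [h2] at hc)
  · refine ⟨fun G => (-1:K)^((G.1.filter (fun u => u < v)).card) * tf K (s+1) χ (insert v G.1),
      funext fun F => ?_⟩
    set η : Cch P K s :=
      fun G => (-1:K)^((G.1.filter (fun u => u < v)).card) * tf K (s+1) χ (insert v G.1)
      with hηdef
    rw [deltaLin_eq]
    have hFt : F.1 ⊆ t := Finset.mem_powerset.mp (by rw [← hP]; exact F.2.1)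
    have hχF : tf K (s+1) χ F.1 = χ F := by rw [tf_pos K χ F.2]
    have hterm : ∀ w ∈ F.1, tf K s η (F.1.erase w)
        = (-1:K)^(((F.1.erase w).filter (fun u => u < v)).card)
            * tf K (s+1) χ (insert v (F.1.erase w)) := by
      intro w hw
      have hm : F.1.erase w ∈ P.faces ∧ (F.1.erase w).card = s :=
        ⟨P.down _ F.2.1 _ (Finset.erase_subset _ _), by
          rw [Finset.card_erase_of_mem hw, F.2.2]; omega⟩
      rw [tf_pos K η hm]
    by_cases hvF : v ∈ F.1
    · rw [Finset.sum_eq_single v]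
      · rw [hterm v hvF, Finset.insert_erase hvF, hχF]
        have hcnt : (F.1.erase v).filter (fun u => u < v) = F.1.filter (fun u => u < v) := by
          rw [Finset.filter_erase]
          exact Finset.erase_eq_of_notMem
            (s := F.1.filter (fun u => u < v)) (a := v) (by simp)
        rw [hcnt]
        show msgn K F.1 v * ((-1:K)^((F.1.filter (fun u => u < v)).card) * χ F) = χ F
        unfold msgn
        rw [← mul_assoc, ← pow_add]
        simp [Even.neg_one_pow ⟨_, rfl⟩]
      · intro w hw hwv
        rw [hterm w hw]
        have hins : insert v (F.1.erase w) = F.1.erase w :=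
          Finset.insert_eq_self.mpr (Finset.mem_erase.mpr ⟨hwv.symm ∘ Eq.symm ∘ id ∘ Eq.symm, hvF⟩)
        rw [hins, tf_neg]
        · ring
        · rintro ⟨_, hc⟩
          rw [Finset.card_erase_of_mem hw, F.2.2] at hc
          omega
      · intro hvn; exact absurd hvF hvn
    · have hF' : insert v F.1 ∈ P.faces ∧ (insert v F.1).card = (s+1)+1 :=
        ⟨by
          have h2 : insert v F.1 ∈ t.powerset :=
            Finset.mem_powerset.mpr (Finset.insert_subset hv hFt)
          rwa [← hP] at h2, by
          rw [Finset.card_insert_of_notMem hvF, F.2.2]⟩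
      have h0 : (0:K) = ∑ w ∈ insert v F.1,
          msgn K (insert v F.1) w * tf K (s+1) χ ((insert v F.1).erase w) := by
        rw [← deltaLin_eq K (s+1) χ ⟨insert v F.1, hF'⟩, hχ]; rfl
      rw [Finset.sum_insert hvF, Finset.erase_insert hvF, hχF] at h0
      have hsum : ∑ w ∈ F.1, msgn K (insert v F.1) w * tf K (s+1) χ ((insert v F.1).erase w)
          = - (msgn K (insert v F.1) v * χ F) :=
        eq_neg_of_add_eq_zero_right h0.symm
      have hmsgnv : msgn K (insert v F.1) v = msgn K F.1 v := by
        have := msgn_erase (K := K) (F := insert v F.1) (w := v) (v := v)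
          (Finset.mem_insert_self v F.1)
        rw [Finset.erase_insert hvF, if_neg (lt_irrefl v)] at this
        rw [this, one_mul]
      have hstep : ∀ w ∈ F.1, msgn K F.1 w * tf K s η (F.1.erase w)
          = - (msgn K (insert v F.1) v
              * (msgn K (insert v F.1) w * tf K (s+1) χ ((insert v F.1).erase w))) := by
        intro w hw
        have hwv : w ≠ v := fun h => hvF (h ▸ hw)
        rw [hterm w hw]
        rw [Finset.erase_insert_of_ne hwv.symm]
        have e1 : (-1:K)^(((F.1.erase w).filter (fun u => u < v)).card)
            = msgn K (F.1.erase w) v := rfl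
        rw [e1, msgn_erase K hw]
        have e2 : msgn K F.1 w = (if v < w then -1 else 1) * msgn K (insert v F.1) w := by
          have := msgn_erase (K := K) (F := insert v F.1) (w := v) (v := w)
            (Finset.mem_insert_self v F.1)
          rw [Finset.erase_insert hvF] at this
          rw [this]
        rw [e2, hmsgnv]
        rcases lt_or_gt_of_ne hwv with hlt | hlt
        · rw [if_pos hlt, if_neg (asymm hlt)]; ring
        · rw [if_neg (asymm hlt), if_pos hlt]; ring
      rw [Finset.sum_congr rfl hstep, Finset.sum_neg_distrib, ← Finset.mul_sum, hsum]
      have hsq : msgn K (insert v F.1) v * msgn K (insert v F.1) v = 1 := by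
        unfold msgn; rw [← pow_add]; exact Even.neg_one_pow ⟨_, rfl⟩
      rw [mul_neg, neg_neg, ← mul_assoc, hsq, one_mul]
end Aux3
section Aux4
variable {n : ℕ} (K : Type) [Field K]

lemma MV_abstract (A B U : SC n) (hA : A.faces ⊆ U.faces) (hB : B.faces ⊆ U.faces)
    (hU : ∀ F ∈ U.faces, F ∈ A.faces ∨ F ∈ B.faces)
    (t : Finset (Fin n)) (ht : A.faces ∩ B.faces = t.powerset)
    (k : ℕ) (h : HredNe U K (k+1)) : HredNe A K (k+1) ∨ HredNe B K (k+1) := by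
  by_contra hc
  push_neg at hc
  obtain ⟨hcA, hcB⟩ := hc
  obtain ⟨φ, hφ, hnb⟩ := h
  unfold HredNe at hcA hcB
  push_neg at hcA hcB
  -- the simplex complex on t
  set P : SC n := ⟨t.powerset, by
    intro F hF G hG
    simp only [Finset.mem_powerset] at *
    exact hG.trans hF, by simp⟩ with hPdef
  have hPfaces : P.faces = t.powerset := rfl
  have hPA : P.faces ⊆ A.faces := by
    rw [hPfaces, ← ht]; exact Finset.inter_subset_left
  have hPB : P.faces ⊆ B.faces := by
    rw [hPfaces, ← ht]; exact Finset.inter_subset_right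
  have hδA : deltaLin A K (k+1+1) (resC K hA (k+1+1) φ) = 0 := by
    rw [res_delta, hφ]; rfl
  have hδB : deltaLin B K (k+1+1) (resC K hB (k+1+1) φ) = 0 := by
    rw [res_delta, hφ]; rfl
  obtain ⟨ψ₁, hψ₁⟩ := hcA _ hδA
  obtain ⟨ψ₂, hψ₂⟩ := hcB _ hδB
  set χ : Cch P K (k+1) := resC K hPA (k+1) ψ₁ - resC K hPB (k+1) ψ₂ with hχdef
  have hχ : deltaLin P K (k+1) χ = 0 := by
    rw [hχdef, map_sub, res_delta, res_delta, hψ₁, hψ₂]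
    funext G
    exact sub_self _
  obtain ⟨η, hη⟩ := simplex_exact K hPfaces k χ hχ
  set ηB : Cch B K k := fun G => tf K k η G.1 with hηBdef
  set ψ₂' : Cch B K (k+1) := ψ₂ + deltaLin B K k ηB with hψ₂'def
  have hδψ₂' : deltaLin B K (k+1) ψ₂' = resC K hB (k+1+1) φ := by
    rw [hψ₂'def, map_add, delta_delta, add_zero, hψ₂]
  have hagree : ∀ (G : Finset (Fin n)) (hGA : G ∈ A.faces) (hGB : G ∈ B.faces)
      (hGc : G.card = k+1), ψ₂' ⟨G, hGB, hGc⟩ = ψ₁ ⟨G, hGA, hGc⟩ := by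
    intro G hGA hGB hGc
    have hGP : G ∈ P.faces := by
      rw [hPfaces, ← ht]; exact Finset.mem_inter.mpr ⟨hGA, hGB⟩
    have h1 : deltaLin B K k ηB ⟨G, hGB, hGc⟩ = deltaLin P K k η ⟨G, hGP, hGc⟩ := by
      rw [deltaLin_eq K k ηB ⟨G, hGB, hGc⟩, deltaLin_eq K k η ⟨G, hGP, hGc⟩]
      refine Finset.sum_congr rfl fun w hw => ?_
      congr 1
      have hmP : G.erase w ∈ P.faces ∧ (G.erase w).card = k :=
        ⟨P.down _ hGP _ (Finset.erase_subset _ _), by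
          rw [Finset.card_erase_of_mem hw, hGc]; omega⟩
      rw [tf_pos K ηB ⟨hPB hmP.1, hmP.2⟩, tf_pos K η hmP]
      show tf K k η (G.erase w) = η ⟨G.erase w, hmP⟩
      exact tf_pos K η hmP
    have h2 : deltaLin P K k η ⟨G, hGP, hGc⟩ = χ ⟨G, hGP, hGc⟩ := by rw [hη]
    have h3 : χ ⟨G, hGP, hGc⟩ = ψ₁ ⟨G, hGA, hGc⟩ - ψ₂ ⟨G, hGB, hGc⟩ := rfl
    show ψ₂ ⟨G, hGB, hGc⟩ + deltaLin B K k ηB ⟨G, hGB, hGc⟩ = ψ₁ ⟨G, hGA, hGc⟩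
    rw [h1, h2, h3]
    ring
  set Ψ : Cch U K (k+1) := fun G =>
    if hGA : G.1 ∈ A.faces then ψ₁ ⟨G.1, hGA, G.2.2⟩
    else ψ₂' ⟨G.1, (hU G.1 G.2.1).resolve_left hGA, G.2.2⟩ with hΨdef
  apply hnb Ψ
  funext F
  by_cases hFA : F.1 ∈ A.faces
  · have key : deltaLin U K (k+1) Ψ F = deltaLin A K (k+1) ψ₁ ⟨F.1, hFA, F.2.2⟩ := by
      rw [deltaLin_eq K (k+1) Ψ F, deltaLin_eq K (k+1) ψ₁ ⟨F.1, hFA, F.2.2⟩]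
      refine Finset.sum_congr rfl fun w hw => ?_
      congr 1
      have hmA : F.1.erase w ∈ A.faces ∧ (F.1.erase w).card = k+1 :=
        ⟨A.down _ hFA _ (Finset.erase_subset _ _), by
          rw [Finset.card_erase_of_mem hw, F.2.2]; omega⟩
      rw [tf_pos K Ψ ⟨hA hmA.1, hmA.2⟩, tf_pos K ψ₁ hmA]
      show (if hGA : F.1.erase w ∈ A.faces then _ else _) = ψ₁ ⟨F.1.erase w, hmA⟩
      rw [dif_pos hmA.1]
    rw [key, hψ₁]
    rfl
  · have hFB : F.1 ∈ B.faces := (hU F.1 F.2.1).resolve_left hFA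
    have key : deltaLin U K (k+1) Ψ F = deltaLin B K (k+1) ψ₂' ⟨F.1, hFB, F.2.2⟩ := by
      rw [deltaLin_eq K (k+1) Ψ F, deltaLin_eq K (k+1) ψ₂' ⟨F.1, hFB, F.2.2⟩]
      refine Finset.sum_congr rfl fun w hw => ?_
      congr 1
      have hmB : F.1.erase w ∈ B.faces ∧ (F.1.erase w).card = k+1 :=
        ⟨B.down _ hFB _ (Finset.erase_subset _ _), by
          rw [Finset.card_erase_of_mem hw, F.2.2]; omega⟩
      rw [tf_pos K Ψ ⟨hB hmB.1, hmB.2⟩, tf_pos K ψ₂' hmB]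
      show (if hGA : F.1.erase w ∈ A.faces then _ else _) = ψ₂' ⟨F.1.erase w, hmB⟩
      by_cases hEA : F.1.erase w ∈ A.faces
      · rw [dif_pos hEA]
        exact (hagree (F.1.erase w) hEA hmB.1 hmB.2).symm
      · rw [dif_neg hEA]
    rw [key, hδψ₂']
    rfl
end Aux4

/-- Mayer–Vietoris: if `Δ = Δ₁ ∪ Δ₂` with `Δ₁ ∩ Δ₂` a simplex (or
empty), `j > 1`, and `H̃^{j-1}(Δ|_σ; K) ≠ 0`, then `H̃^{j-1}(Δ₁|_{σ₁}; K) ≠ 0` or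
`H̃^{j-1}(Δ₂|_{σ₂}; K) ≠ 0`, where `σ_i` is the set of vertices of `σ` lying in `Δ_i`. -/
theorem mayer_vietoris_restriction {n : ℕ} (K : Type) [Field K] (Δ Δ₁ Δ₂ : SC n)
    (hunion : Δ.faces = Δ₁.faces ∪ Δ₂.faces)
    (hS : ∃ s : Finset (Fin n), Δ₁.faces ∩ Δ₂.faces = s.powerset)
    (j : ℕ) (hj : 1 < j) (σ : Finset (Fin n))
    (h : HredNe (Δ.restrict σ) K (j - 1)) :
    HredNe (Δ₁.restrict (σ.filter (fun w => ({w} : Finset (Fin n)) ∈ Δ₁.faces))) K (j - 1) ∨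
    HredNe (Δ₂.restrict (σ.filter (fun w => ({w} : Finset (Fin n)) ∈ Δ₂.faces))) K (j - 1) := by
  obtain ⟨s', hs'⟩ := hS
  have hk : j - 1 = (j - 2) + 1 := by omega
  rw [hk] at h ⊢
  set σ₁ := σ.filter (fun w => ({w} : Finset (Fin n)) ∈ Δ₁.faces) with hσ₁
  set σ₂ := σ.filter (fun w => ({w} : Finset (Fin n)) ∈ Δ₂.faces) with hσ₂
  have hA : (Δ₁.restrict σ₁).faces ⊆ (Δ.restrict σ).faces := by
    intro F hF
    simp only [SC.restrict, Finset.mem_filter] at hF ⊢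
    exact ⟨by rw [hunion]; exact Finset.mem_union_left _ hF.1,
      hF.2.trans (Finset.filter_subset _ _)⟩
  have hB : (Δ₂.restrict σ₂).faces ⊆ (Δ.restrict σ).faces := by
    intro F hF
    simp only [SC.restrict, Finset.mem_filter] at hF ⊢
    exact ⟨by rw [hunion]; exact Finset.mem_union_right _ hF.1,
      hF.2.trans (Finset.filter_subset _ _)⟩
  have hU : ∀ F ∈ (Δ.restrict σ).faces,
      F ∈ (Δ₁.restrict σ₁).faces ∨ F ∈ (Δ₂.restrict σ₂).faces := by
    intro F hF
    simp only [SC.restrict, Finset.mem_filter] at hF ⊢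
    have hFσ := hF.2
    have hF1 := hF.1
    rw [hunion, Finset.mem_union] at hF1
    rcases hF1 with h1 | h2
    · left
      exact ⟨h1, fun w hw => Finset.mem_filter.mpr ⟨hFσ hw,
        Δ₁.down F h1 {w} (Finset.singleton_subset_iff.mpr hw)⟩⟩
    · right
      exact ⟨h2, fun w hw => Finset.mem_filter.mpr ⟨hFσ hw,
        Δ₂.down F h2 {w} (Finset.singleton_subset_iff.mpr hw)⟩⟩
  have ht : (Δ₁.restrict σ₁).faces ∩ (Δ₂.restrict σ₂).faces = (s' ∩ σ).powerset := by
    ext F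
    simp only [SC.restrict, Finset.mem_inter, Finset.mem_filter, Finset.mem_powerset]
    constructor
    · rintro ⟨⟨h1, h1s⟩, ⟨h2, h2s⟩⟩
      have hFs' : F ⊆ s' := Finset.mem_powerset.mp
        (by rw [← hs']; exact Finset.mem_inter.mpr ⟨h1, h2⟩)
      exact Finset.subset_inter hFs' (h1s.trans (Finset.filter_subset _ _))
    · intro hsub
      have hFs' : F ⊆ s' := hsub.trans Finset.inter_subset_left
      have hFσ : F ⊆ σ := hsub.trans Finset.inter_subset_right
      have hmem : F ∈ Δ₁.faces ∩ Δ₂.faces := by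
        rw [hs']; exact Finset.mem_powerset.mpr hFs'
      have hsing : ∀ w ∈ F, ({w} : Finset (Fin n)) ∈ Δ₁.faces ∩ Δ₂.faces := by
        intro w hw
        rw [hs']
        exact Finset.mem_powerset.mpr (Finset.singleton_subset_iff.mpr (hFs' hw))
      refine ⟨⟨(Finset.mem_inter.mp hmem).1, fun w hw => Finset.mem_filter.mpr
          ⟨hFσ hw, (Finset.mem_inter.mp (hsing w hw)).1⟩⟩,
        ⟨(Finset.mem_inter.mp hmem).2, fun w hw => Finset.mem_filter.mpr
          ⟨hFσ hw, (Finset.mem_inter.mp (hsing w hw)).2⟩⟩⟩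
  exact MV_abstract K (Δ₁.restrict σ₁) (Δ₂.restrict σ₂) (Δ.restrict σ)
    hA hB hU (s' ∩ σ) ht (j - 2) h
end

section
/- Every matroid independence complex is vertex decomposable, and every connected graph (viewed as a 1-dimensional simplicial complex, together with its vertices) is vertex decomposable. -/
open Finset

open scoped Classical

section VDHelpers

variable {n : ℕ}

lemma SC.mem_link_iff (Δ : SC n) (v : Fin n) (F : Finset (Fin n)) :
    F ∈ (Δ.link v).faces ↔ F = ∅ ∨ (F ∈ Δ.faces ∧ v ∉ F ∧ insert v F ∈ Δ.faces) := by
  simp [SC.link, and_assoc]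

lemma SC.mem_del_iff (Δ : SC n) (v : Fin n) (F : Finset (Fin n)) :
    F ∈ (Δ.del v).faces ↔ F ∈ Δ.faces ∧ v ∉ F := by
  simp [SC.del]

lemma SC.mem_restrict_iff (Δ : SC n) (σ F : Finset (Fin n)) :
    F ∈ (Δ.restrict σ).faces ↔ F ∈ Δ.faces ∧ F ⊆ σ := by
  simp [SC.restrict]

lemma facet_congr {Δ₁ Δ₂ : SC n} (h : Δ₁.faces = Δ₂.faces) {F : Finset (Fin n)}
    (hF : Δ₂.isFacet F) : Δ₁.isFacet F := by
  unfold SC.isFacet at *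
  rw [h]; exact hF

lemma pure_congr {Δ₁ Δ₂ : SC n} (h : Δ₁.faces = Δ₂.faces) (hp : Δ₁.Pure) : Δ₂.Pure := by
  intro F G hF hG
  exact hp F G (facet_congr h hF) (facet_congr h hG)

lemma faces_pos (Δ : SC n) : 0 < Δ.faces.card :=
  Finset.card_pos.mpr ⟨∅, Δ.empty_mem⟩

lemma exists_facet_above (Δ : SC n) {I : Finset (Fin n)} (hI : I ∈ Δ.faces) :
    ∃ F, I ⊆ F ∧ Δ.isFacet F := by
  obtain ⟨F, hF, hmax⟩ := (Δ.faces.filter (fun F => I ⊆ F)).exists_max_image Finset.card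
    ⟨I, by simp [hI]⟩
  simp only [Finset.mem_filter] at hF
  refine ⟨F, hF.2, hF.1, fun G hG hFG => Finset.eq_of_subset_of_card_le hFG ?_⟩
  exact hmax G (by simp [hG, hF.2.trans hFG])

lemma facet_empty {Δ : SC n} (h : Δ.isFacet ∅) : Δ.faces = {∅} := by
  ext G
  simp only [Finset.mem_singleton]
  constructor
  · intro hG; exact (h.2 G hG (Finset.empty_subset _)).symm
  · rintro rfl; exact Δ.empty_mem

lemma exists_vertex {Δ : SC n} (h : Δ.faces ≠ {∅}) : ∃ v, ({v} : Finset (Fin n)) ∈ Δ.faces := by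
  by_contra hc
  push_neg at hc
  apply h
  ext G
  simp only [Finset.mem_singleton]
  constructor
  · intro hG
    by_contra hne
    obtain ⟨x, hx⟩ := Finset.nonempty_iff_ne_empty.mpr hne
    exact hc x (Δ.down G hG {x} (Finset.singleton_subset_iff.mpr hx))
  · rintro rfl; exact Δ.empty_mem

lemma link_ssubset {Δ : SC n} {v : Fin n} (hv : ({v} : Finset (Fin n)) ∈ Δ.faces) :
    (Δ.link v).faces ⊂ Δ.faces := by
  have hsub : (Δ.link v).faces ⊆ Δ.faces := by
    intro F hF
    rcases (Δ.mem_link_iff v F).mp hF with rfl | hF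
    · exact Δ.empty_mem
    · exact hF.1
  rw [Finset.ssubset_iff_of_subset hsub]
  exact ⟨{v}, hv, by simp [SC.mem_link_iff]⟩

lemma del_ssubset {Δ : SC n} {v : Fin n} (hv : ({v} : Finset (Fin n)) ∈ Δ.faces) :
    (Δ.del v).faces ⊂ Δ.faces := by
  have hsub : (Δ.del v).faces ⊆ Δ.faces := by
    intro F hF
    exact ((Δ.mem_del_iff v F).mp hF).1
  rw [Finset.ssubset_iff_of_subset hsub]
  exact ⟨{v}, hv, by simp [SC.mem_del_iff]⟩

end VDHelpers

section MatroidVD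

variable {n : ℕ}

lemma matroid_augment (Δ : SC n) (hM : ∀ σ, (Δ.restrict σ).Pure)
    {I J : Finset (Fin n)} (hI : I ∈ Δ.faces) (hJ : J ∈ Δ.faces) (h : I.card < J.card) :
    ∃ x ∈ J, x ∉ I ∧ insert x I ∈ Δ.faces := by
  set Δ' := Δ.restrict (I ∪ J) with hΔ'
  have hI' : I ∈ Δ'.faces := (Δ.mem_restrict_iff _ _).mpr ⟨hI, Finset.subset_union_left⟩
  have hJ' : J ∈ Δ'.faces := (Δ.mem_restrict_iff _ _).mpr ⟨hJ, Finset.subset_union_right⟩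
  obtain ⟨F, hIF, hF⟩ := exists_facet_above Δ' hI'
  obtain ⟨G, hJG, hG⟩ := exists_facet_above Δ' hJ'
  have hcard : F.card = G.card := hM (I ∪ J) F G hF hG
  have hIltF : I.card < F.card := by
    calc I.card < J.card := h
    _ ≤ G.card := Finset.card_le_card hJG
    _ = F.card := hcard.symm
  have hssub : I ⊂ F := hIF.ssubset_of_ne (by rintro rfl; omega)
  obtain ⟨x, hxF, hxI⟩ := Finset.exists_of_ssubset hssub
  have hFm := (Δ.mem_restrict_iff _ _).mp hF.1
  have hxJ : x ∈ J := by
    have := hFm.2 hxF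
    simp only [Finset.mem_union] at this
    tauto
  exact ⟨x, hxJ, hxI, Δ.down F hFm.1 _ (Finset.insert_subset hxF hIF)⟩

lemma no_lt_facets_pure (Δ : SC n)
    (h : ∀ F G : Finset (Fin n), Δ.isFacet F → Δ.isFacet G → F.card < G.card → False) :
    Δ.Pure := by
  intro F G hF hG
  rcases lt_trichotomy F.card G.card with h1 | h1 | h1
  · exact absurd h1 fun h1 => h F G hF hG h1
  · exact h1
  · exact absurd h1 fun h1 => h G F hG hF h1

lemma matroid_pure (Δ : SC n) (hM : ∀ σ, (Δ.restrict σ).Pure) : Δ.Pure := by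
  apply no_lt_facets_pure
  intro F G hF hG hlt
  obtain ⟨x, _, hxF, hins⟩ := matroid_augment Δ hM hF.1 hG.1 hlt
  have := hF.2 _ hins (Finset.subset_insert x F)
  exact hxF (this ▸ Finset.mem_insert_self x F)

lemma matroid_del (Δ : SC n) (hM : ∀ σ, (Δ.restrict σ).Pure) (v : Fin n) :
    ∀ σ, ((Δ.del v).restrict σ).Pure := by
  intro σ
  apply pure_congr (Δ₁ := Δ.restrict (σ.erase v)) ?_ (hM _)
  ext F
  simp only [SC.mem_restrict_iff, SC.mem_del_iff, Finset.subset_erase]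
  tauto

lemma matroid_link (Δ : SC n) (hM : ∀ σ, (Δ.restrict σ).Pure) (v : Fin n) :
    ∀ σ, ((Δ.link v).restrict σ).Pure := by
  intro σ
  apply no_lt_facets_pure
  intro F G hF hG hlt
  have hFm := (SC.mem_restrict_iff _ _ _).mp hF.1
  have hGm := (SC.mem_restrict_iff _ _ _).mp hG.1
  have hGlink := (Δ.mem_link_iff v G).mp hGm.1
  have hGne : G ≠ ∅ := by
    intro h
    rw [h] at hlt
    simp at hlt
  rcases hGlink with h | ⟨hGf, hvG, hvGf⟩
  · exact hGne h
  have hvF : v ∉ F := by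
    rcases (Δ.mem_link_iff v F).mp hFm.1 with h | h
    · subst h; simp
    · exact h.2.1
  have hFf : insert v F ∈ Δ.faces := by
    rcases (Δ.mem_link_iff v F).mp hFm.1 with h | h
    · subst h
      exact Δ.down _ hvGf _ (by simp)
    · exact h.2.2
  have hcard : (insert v F).card < (insert v G).card := by
    rw [Finset.card_insert_of_notMem hvF, Finset.card_insert_of_notMem hvG]
    omega
  obtain ⟨x, hxJ, hxI, hins⟩ := matroid_augment Δ hM hFf hvGf hcard
  have hxv : x ≠ v := fun h => hxI (h ▸ Finset.mem_insert_self v F)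
  have hxG : x ∈ G := by
    rcases Finset.mem_insert.mp hxJ with h | h
    · exact absurd h hxv
    · exact h
  have hxF : x ∉ F := fun h => hxI (Finset.mem_insert_of_mem h)
  have hmem : insert x F ∈ ((Δ.link v).restrict σ).faces := by
    rw [SC.mem_restrict_iff]
    constructor
    · rw [Δ.mem_link_iff]
      right
      refine ⟨Δ.down _ hins _ (Finset.insert_subset_insert x (Finset.subset_insert v F)), ?_, ?_⟩
      · intro hy
        rcases Finset.mem_insert.mp hy with h | h
        · exact hxv h.symm
        · exact hvF h
      · rw [Finset.insert_comm]; exact hins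
    · exact Finset.insert_subset (hGm.2 hxG) hFm.2
  have := hF.2 _ hmem (Finset.subset_insert x F)
  exact hxF (this ▸ Finset.mem_insert_self x F)

lemma matroid_vd : ∀ (N : ℕ) {n : ℕ} (Δ : SC n), Δ.faces.card ≤ N →
    (∀ σ, (Δ.restrict σ).Pure) → IsVD Δ := by
  intro N
  induction N with
  | zero =>
    intro n Δ h _
    have := faces_pos Δ
    omega
  | succ N ih =>
    intro n Δ hcard hM
    by_cases h0 : Δ.faces = {∅}
    · exact IsVD.triv Δ h0
    · obtain ⟨v, hv⟩ := exists_vertex h0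
      refine IsVD.step Δ (matroid_pure Δ hM) v ?_ ?_
      · refine ih _ ?_ (matroid_del Δ hM v)
        have := Finset.card_lt_card (del_ssubset hv)
        omega
      · refine ih _ ?_ (matroid_link Δ hM v)
        have := Finset.card_lt_card (link_ssubset hv)
        omega

end MatroidVD

section GraphVD

variable {n : ℕ}

lemma zero_dim_vd : ∀ (N : ℕ) {n : ℕ} (Δ : SC n), Δ.faces.card ≤ N →
    (∀ F ∈ Δ.faces, F.card ≤ 1) → IsVD Δ := by
  intro N
  induction N with
  | zero =>
    intro n Δ h _
    have := faces_pos Δ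
    omega
  | succ N ih =>
    intro n Δ hcard hdim
    by_cases h0 : Δ.faces = {∅}
    · exact IsVD.triv Δ h0
    · obtain ⟨v, hv⟩ := exists_vertex h0
      have hcard1 : ∀ F, Δ.isFacet F → F.card = 1 := by
        intro F hF
        have h1 := hdim F hF.1
        have h2 : F ≠ ∅ := fun h => h0 (facet_empty (h ▸ hF))
        have h3 : F.card ≠ 0 := fun h => h2 (Finset.card_eq_zero.mp h)
        omega
      have hpure : Δ.Pure := fun F G hF hG => by rw [hcard1 F hF, hcard1 G hG]
      have hlink : (Δ.link v).faces = {∅} := by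
        ext F
        simp only [Finset.mem_singleton]
        rw [Δ.mem_link_iff]
        constructor
        · rintro (rfl | ⟨hF, hvF, hins⟩)
          · rfl
          · have := hdim _ hins
            rw [Finset.card_insert_of_notMem hvF] at this
            exact Finset.card_eq_zero.mp (by omega)
        · rintro rfl; left; rfl
      refine IsVD.step Δ hpure v ?_ (IsVD.triv _ hlink)
      refine ih _ ?_ ?_
      · have := Finset.card_lt_card (del_ssubset hv)
        omega
      · intro F hF
        exact hdim F ((SC.mem_del_iff _ _ _).mp hF).1

def reachN {α : Type} (R : α → α → Prop) : ℕ → α → α → Prop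
  | 0 => Eq
  | (k+1) => fun a b => ∃ c, reachN R k a c ∧ R c b

lemma reachN_zero {α : Type} {R : α → α → Prop} {a b : α} (h : reachN R 0 a b) : a = b := h

lemma rtg_reachN {α : Type} {R : α → α → Prop} {a b : α}
    (h : Relation.ReflTransGen R a b) : ∃ k, reachN R k a b := by
  induction h with
  | refl => exact ⟨0, rfl⟩
  | tail _ h2 ih =>
    obtain ⟨k, hk⟩ := ih
    exact ⟨k + 1, _, hk, h2⟩

lemma first_step {α : Type} {R : α → α → Prop} {a b : α}
    (h : Relation.ReflTransGen R a b) : a ≠ b → ∃ y, y ≠ a ∧ R a y := by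
  induction h using Relation.ReflTransGen.head_induction_on with
  | refl => exact fun hne => absurd rfl hne
  | @head x c h' h'' ih =>
    intro hne
    by_cases hxc : c = x
    · subst hxc
      exact ih hne
    · exact ⟨c, hxc, h'⟩

lemma graph_vd : ∀ (N : ℕ) {n : ℕ} (Δ : SC n), Δ.faces.card ≤ N →
    (∀ F ∈ Δ.faces, F.card ≤ 2) →
    (∀ a b : Fin n, ({a} : Finset (Fin n)) ∈ Δ.faces → ({b} : Finset (Fin n)) ∈ Δ.faces →
      Relation.ReflTransGen (fun x y : Fin n => ({x, y} : Finset (Fin n)) ∈ Δ.faces) a b) →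
    IsVD Δ := by
  intro N
  induction N with
  | zero =>
    intro n Δ h _ _
    have := faces_pos Δ
    omega
  | succ N ih =>
    intro n Δ hcard hdim hcon
    by_cases h1 : ∀ F ∈ Δ.faces, F.card ≤ 1
    · exact zero_dim_vd _ Δ hcard h1
    push_neg at h1
    obtain ⟨E, hE, hE2⟩ := h1
    have hE2' : E.card = 2 := le_antisymm (hdim E hE) hE2
    obtain ⟨a, b, hab, rfl⟩ := Finset.card_eq_two.mp hE2'
    have hva : ({a} : Finset (Fin n)) ∈ Δ.faces := Δ.down _ hE _ (by simp)
    have hvb : ({b} : Finset (Fin n)) ∈ Δ.faces := Δ.down _ hE _ (by simp)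
    set R : Fin n → Fin n → Prop := fun x y => ({x, y} : Finset (Fin n)) ∈ Δ.faces with hR
    have hnbr : ∀ w : Fin n, ({w} : Finset (Fin n)) ∈ Δ.faces → ∃ y, y ≠ w ∧ R w y := by
      intro w hw
      by_cases hwa : w = a
      · subst hwa
        exact first_step (hcon w b hw hvb) hab
      · exact first_step (hcon w a hw hva) hwa
    have hpure : Δ.Pure := by
      have h2 : ∀ F, Δ.isFacet F → F.card = 2 := by
        intro F hF
        have hle := hdim F hF.1
        rcases Nat.lt_or_ge F.card 2 with hlt | hge
        · exfalso
          rcases Nat.lt_or_ge F.card 1 with hlt1 | hge1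
          · have hFe : F = ∅ := Finset.card_eq_zero.mp (by omega)
            subst hFe
            have := facet_empty hF
            rw [this] at hE
            simp at hE
          · obtain ⟨w, rfl⟩ := Finset.card_eq_one.mp (le_antisymm (by omega) hge1)
            obtain ⟨y, hy, hRy⟩ := hnbr w hF.1
            have heq := hF.2 _ hRy (by simp : ({w} : Finset (Fin n)) ⊆ {w, y})
            have hy' : y ∈ ({w, y} : Finset (Fin n)) := by simp
            rw [← heq] at hy'
            simp at hy'
            exact hy hy'
        · omega
      intro F G hF hG
      rw [h2 F hF, h2 G hG]
    -- distance function from root a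
    have hex : ∀ w, ({w} : Finset (Fin n)) ∈ Δ.faces → ∃ m, reachN R m a w :=
      fun w hw => rtg_reachN (hcon a w hva hw)
    set f : Fin n → ℕ := fun w => if h : ∃ m, reachN R m a w then Nat.find h else 0 with hf
    have hfw : ∀ (w : Fin n) (h : ∃ m, reachN R m a w), f w = Nat.find h := by
      intro w h
      rw [hf]
      exact dif_pos h
    set V : Finset (Fin n) := Finset.univ.filter
      (fun w => ({w} : Finset (Fin n)) ∈ Δ.faces) with hV
    have hVa : a ∈ V := by simp [hV, hva]
    obtain ⟨v, hvV, hvmax⟩ := V.exists_max_image f ⟨a, hVa⟩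
    have hvface : ({v} : Finset (Fin n)) ∈ Δ.faces := (Finset.mem_filter.mp hvV).2
    have hfa : f a = 0 := by
      rw [hfw a ⟨0, rfl⟩]
      exact Nat.le_zero.mp (Nat.find_min' _ rfl)
    have hvne : v ≠ a := by
      intro h
      have hbV : b ∈ V := by simp [hV, hvb]
      have h1 := hvmax b hbV
      rw [h, hfa] at h1
      have h2 := hfw b (hex b hvb)
      have h3 : Nat.find (hex b hvb) = 0 := by omega
      have h4 := Nat.find_spec (hex b hvb)
      rw [h3] at h4
      exact hab (reachN_zero h4)
    set R' : Fin n → Fin n → Prop :=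
      fun x y => ({x, y} : Finset (Fin n)) ∈ (Δ.del v).faces with hR'
    have key : ∀ (k : ℕ) (w : Fin n), ({w} : Finset (Fin n)) ∈ Δ.faces → w ≠ v → f w ≤ k →
        Relation.ReflTransGen R' a w := by
      intro k
      induction k with
      | zero =>
        intro w hw hwv hfle
        have h0 : Nat.find (hex w hw) = 0 := by
          have := hfw w (hex w hw)
          omega
        have hsp := Nat.find_spec (hex w hw)
        rw [h0] at hsp
        rw [← reachN_zero hsp]
      | succ k ihk =>
        intro w hw hwv hfle
        rcases Nat.lt_or_ge (f w) (k + 1) with hlt | hge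
        · exact ihk w hw hwv (by omega)
        have hfweq : f w = k + 1 := by omega
        have hfk : Nat.find (hex w hw) = k + 1 := by
          have := hfw w (hex w hw)
          omega
        have hsp := Nat.find_spec (hex w hw)
        rw [hfk] at hsp
        obtain ⟨c, hrc, hcw⟩ := hsp
        have hcface : ({c} : Finset (Fin n)) ∈ Δ.faces := Δ.down _ hcw _ (by simp)
        have hfc : f c ≤ k := by
          rw [hfw c (hex c hcface)]
          exact Nat.find_min' _ hrc
        have hcv : c ≠ v := by
          intro h
          have hwV : w ∈ V := by simp [hV, hw]
          have h5 := hvmax w hwV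
          rw [← h] at h5
          omega
        refine Relation.ReflTransGen.tail (ihk c hcface hcv hfc) ?_
        show ({c, w} : Finset (Fin n)) ∈ (Δ.del v).faces
        rw [SC.mem_del_iff]
        refine ⟨hcw, ?_⟩
        intro hmem
        rcases Finset.mem_insert.mp hmem with h | h
        · exact hcv h.symm
        · exact hwv (Finset.mem_singleton.mp h).symm
    refine IsVD.step Δ hpure v ?_ ?_
    · refine ih (Δ.del v) ?_ ?_ ?_
      · have := Finset.card_lt_card (del_ssubset hvface)
        omega
      · intro F hF
        exact hdim F ((SC.mem_del_iff _ _ _).mp hF).1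
      · intro x y hx hy
        have hx' := (SC.mem_del_iff _ _ _).mp hx
        have hy' := (SC.mem_del_iff _ _ _).mp hy
        have hxv : x ≠ v := fun h => hx'.2 (by simp [h])
        have hyv : y ≠ v := fun h => hy'.2 (by simp [h])
        have h1 : Relation.ReflTransGen R' a x := key (f x) x hx'.1 hxv le_rfl
        have h2 : Relation.ReflTransGen R' a y := key (f y) y hy'.1 hyv le_rfl
        have hsymm : Symmetric R' := by
          intro p q hpq
          show ({q, p} : Finset (Fin n)) ∈ (Δ.del v).faces
          rwa [Finset.pair_comm]
        exact Relation.ReflTransGen.trans ((@Relation.ReflTransGen.stdSymm _ R' ⟨fun _ _ h => hsymm h⟩).symm _ _ h1) h2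
    · refine zero_dim_vd (Δ.link v).faces.card (Δ.link v) le_rfl ?_
      intro F hF
      rcases (Δ.mem_link_iff v F).mp hF with rfl | ⟨hFf, hvF, hins⟩
      · simp
      · have := hdim _ hins
        rw [Finset.card_insert_of_notMem hvF] at this
        omega

end GraphVD

/-- Every matroid complex (all restrictions pure) is vertex
decomposable, and every connected graph (a 1-dimensional complex whose vertices are
pairwise connected by edge paths) is vertex decomposable. -/
theorem matroid_and_connected_graph_vd :
    (∀ (n : ℕ) (Δ : SC n), (∀ σ : Finset (Fin n), (Δ.restrict σ).Pure) → IsVD Δ) ∧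
    (∀ (n : ℕ) (Δ : SC n), (∀ F ∈ Δ.faces, F.card ≤ 2) →
      (∀ a b : Fin n, ({a} : Finset (Fin n)) ∈ Δ.faces →
        ({b} : Finset (Fin n)) ∈ Δ.faces →
        Relation.ReflTransGen
          (fun x y : Fin n => ({x, y} : Finset (Fin n)) ∈ Δ.faces) a b) →
      IsVD Δ) := by
  constructor
  · intro n Δ hM
    exact matroid_vd Δ.faces.card Δ le_rfl hM
  · intro n Δ hdim hcon
    exact graph_vd Δ.faces.card Δ le_rfl hdim hcon
end
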